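/- Let X be an equiangular set of unit vectors in ℝ^r with angle α ∈ (0,1) and |X| > 2r. Then 1/α is an odd integer. -/

import Mathlib

open Polynomial Matrix

lemma auxA {K : Type*} [Field K] {ι : Type*} [Fintype ι] [DecidableEq ι] {s : ℕ}
    (A : Matrix ι ι K) (f : Fin s → ι) : (A.submatrix f f).rank ≤ A.rank := by
  classical
  set P : Matrix (Fin s) ι K := Matrix.of fun i x => if x = f i then 1 else 0 with hP
  have h : A.submatrix f f = P * A * Pᵀ := by
    ext i j
    simp only [Matrix.mul_apply, Matrix.transpose_apply, hP, Matrix.of_apply,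
      Matrix.submatrix_apply, ite_mul, one_mul, zero_mul, mul_ite, mul_one, mul_zero]
    simp [Finset.sum_ite_eq']
  rw [h]
  exact le_trans (Matrix.rank_mul_le_left _ _) (Matrix.rank_mul_le_right _ _)

lemma auxC {R : Type*} [CommRing R] {n : Type*} [Fintype n] [DecidableEq n] (d : n → R) :
    (Matrix.diagonal d).charpoly = ∏ i, (X - C (d i)) := by
  have h : charmatrix (Matrix.diagonal d) = Matrix.diagonal (fun i => (X : R[X]) - C (d i)) := by
    ext i j
    by_cases hij : i = j
    · subst hij; simp [charmatrix_apply_eq]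
    · simp [charmatrix_apply_ne _ _ _ hij, Matrix.diagonal_apply_ne _ hij]
  rw [Matrix.charpoly, h, Matrix.det_diagonal]

lemma auxB {R : Type*} [CommRing R] {n : Type*} [Fintype n] [DecidableEq n]
    (U M V : Matrix n n R) (hUV : U * V = 1) :
    (U * M * V).charpoly = M.charpoly := by
  have hscal : (U.map C) * (Matrix.scalar n (X : R[X])) * (V.map C) = Matrix.scalar n (X : R[X]) := by
    rw [Matrix.scalar_apply, ← Matrix.smul_eq_mul_diagonal, Matrix.smul_mul, ← Matrix.map_mul,
      hUV]
    simp [Matrix.smul_eq_diagonal_mul]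
  have hcm : charmatrix (U * M * V) = (U.map C) * charmatrix M * (V.map C) := by
    rw [charmatrix, charmatrix, Matrix.mul_sub, Matrix.sub_mul, hscal]
    congr 1
    simp only [RingHom.mapMatrix_apply, ← Matrix.map_mul]
  rw [Matrix.charpoly, Matrix.charpoly, hcm, Matrix.det_mul, Matrix.det_mul]
  have : (U.map C).det * M.charmatrix.det * (V.map C).det
      = M.charmatrix.det * ((U.map C).det * (V.map C).det) := by ring
  rw [this, ← Matrix.det_mul, ← Matrix.map_mul, hUV]
  simp

lemma auxD (p : Polynomial ℤ) (hmonic : p.Monic) {n m : ℕ} (hdeg : p.natDegree = n)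
    (hn : 0 < n) (h2m : n < 2 * m) (lam : ℝ)
    (hdvd : (X - C lam) ^ m ∣ p.map (Int.castRingHom ℝ)) :
    ∃ l : ℤ, (l : ℝ) = lam := by
  have hm : 0 < m := by omega
  have hpR : p.map (Int.castRingHom ℝ) ≠ 0 := (hmonic.map _).ne_zero
  have hroot : (p.map (Int.castRingHom ℝ)).eval lam = 0 := by
    have : (X - C lam) ∣ p.map (Int.castRingHom ℝ) :=
      dvd_trans (dvd_pow_self _ hm.ne') hdvd
    exact (dvd_iff_isRoot.mp this)
  have haev : aeval lam p = 0 := by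
    rwa [aeval_def, eval₂_eq_eval_map]
  have hint : IsIntegral ℤ lam := ⟨p, hmonic, haev⟩
  have halg : IsIntegral ℚ lam := hint.tower_top
  set q : Polynomial ℚ := minpoly ℚ lam with hq
  have hqirr : Irreducible q := minpoly.irreducible halg
  have hqmonic : q.Monic := minpoly.monic halg
  set pQ : Polynomial ℚ := p.map (Int.castRingHom ℚ) with hpQ
  have hpQ0 : pQ ≠ 0 := (hmonic.map _).ne_zero
  have hpQdeg : pQ.natDegree = n := by
    rw [hpQ, hmonic.natDegree_map, hdeg]
  have hmapmap : pQ.map (algebraMap ℚ ℝ) = p.map (Int.castRingHom ℝ) := by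
    rw [hpQ, Polynomial.map_map]
    congr 1
  have hqdvd : q ∣ pQ := by
    apply minpoly.dvd
    rw [aeval_def, eval₂_eq_eval_map, hmapmap]
    exact hroot
  have hfin : FiniteMultiplicity q pQ :=
    finiteMultiplicity_of_degree_pos_of_monic
      (degree_pos_of_irreducible hqirr) hqmonic hpQ0
  obtain ⟨s, hps, hqns⟩ := hfin.exists_eq_pow_mul_and_not_dvd
  set k : ℕ := multiplicity q pQ with hk
  have hqsep : q.Separable := hqirr.separable
  have hqRsep : (q.map (algebraMap ℚ ℝ)).Separable := hqsep.map
  have hqR0 : (q.map (algebraMap ℚ ℝ)) ≠ 0 := (hqmonic.map _).ne_zero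
  have hs0 : s ≠ 0 := by rintro rfl; rw [mul_zero] at hps; exact hpQ0 hps
  have hsR0 : s.map (algebraMap ℚ ℝ) ≠ 0 := fun h =>
    hs0 (Polynomial.map_injective _ (algebraMap ℚ ℝ).injective (by simpa using h))
  have hmult_q : rootMultiplicity lam (q.map (algebraMap ℚ ℝ)) ≤ 1 := by
    by_contra h
    push_neg at h
    have h2 : (X - C lam) ^ 2 ∣ q.map (algebraMap ℚ ℝ) :=
      dvd_trans (pow_dvd_pow _ h) (pow_rootMultiplicity_dvd _ _)
    have := hqRsep.squarefree (X - C lam) (by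
      obtain ⟨c, hc⟩ := h2; exact ⟨c, by rw [hc]; ring⟩)
    exact (Polynomial.not_isUnit_X_sub_C lam) this
  have hmult_s : rootMultiplicity lam (s.map (algebraMap ℚ ℝ)) = 0 := by
    apply rootMultiplicity_eq_zero
    intro hroots
    exact hqns (minpoly.dvd ℚ lam (by rw [aeval_def, eval₂_eq_eval_map]; exact hroots))
  have hpow : ∀ j : ℕ, rootMultiplicity lam ((q.map (algebraMap ℚ ℝ)) ^ j) ≤ j := by
    intro j
    induction j with
    | zero => rw [pow_zero]; rw [rootMultiplicity_eq_zero (by simp [IsRoot])]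
    | succ j ih =>
        rw [pow_succ, rootMultiplicity_mul (mul_ne_zero (pow_ne_zero _ hqR0) hqR0)]
        omega
  -- m ≤ k
  have hmk : m ≤ k := by
    have h1 : m ≤ rootMultiplicity lam (p.map (Int.castRingHom ℝ)) :=
      (le_rootMultiplicity_iff hpR).mpr hdvd
    have h2 : p.map (Int.castRingHom ℝ) = (q.map (algebraMap ℚ ℝ)) ^ k * s.map (algebraMap ℚ ℝ) := by
      rw [← hmapmap, hps, Polynomial.map_mul, Polynomial.map_pow]
    rw [h2, rootMultiplicity_mul (by rw [← h2]; exact hpR), hmult_s, add_zero] at h1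
    exact h1.trans (hpow k)
  -- degree bound
  have hdegq : q.natDegree = 1 := by
    have hd1 : 1 ≤ q.natDegree := minpoly.natDegree_pos halg
    by_contra hne
    have hd2 : 2 ≤ q.natDegree := by
      rcases Nat.lt_or_ge q.natDegree 2 with h | h
      · interval_cases h' : q.natDegree <;> omega
      · exact h
    have hdvdpow : q ^ k ∣ pQ := ⟨s, hps⟩
    have : (q ^ k).natDegree ≤ n := hpQdeg ▸ natDegree_le_of_dvd hdvdpow hpQ0
    rw [natDegree_pow] at this
    nlinarith
  -- q = X + C c
  have hqeq : q = X + C (q.coeff 0) := hqmonic.eq_X_add_C hdegq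
  have hlamval : lam = ((-q.coeff 0 : ℚ) : ℝ) := by
    have := minpoly.aeval ℚ lam
    rw [← hq, hqeq] at this
    simp only [map_add, aeval_X, aeval_C] at this
    rw [eq_ratCast (algebraMap ℚ ℝ) (q.coeff 0)] at this
    push_cast
    linarith [this]
  have hintc : IsIntegral ℤ (-q.coeff 0 : ℚ) := by
    rw [← isIntegral_algebraMap_iff (algebraMap ℚ ℝ).injective]
    rw [show algebraMap ℚ ℝ (-q.coeff 0 : ℚ) = lam from (by rw [hlamval]; rfl)]
    exact hint
  obtain ⟨l, hl⟩ := IsIntegrallyClosed.isIntegral_iff.mp hintc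
  refine ⟨l, ?_⟩
  rw [hlamval, ← hl]
  rw [show (algebraMap ℤ ℚ) l = (l : ℚ) from map_intCast _ l]
  norm_cast

lemma seidel_aux {ι : Type*} [Fintype ι] [DecidableEq ι] (ε : ι → ι → ℤ)
    (hsymm : ∀ x y, ε x y = ε y x)
    (hdiag : ∀ x, ε x x = 0)
    (hpm : ∀ x y, x ≠ y → ε x y = 1 ∨ ε x y = -1)
    (r : ℕ) (hr : 0 < r) (hcard : 2 * r < Fintype.card ι)
    (lam : ℝ)
    (hrank : ((Matrix.of fun x y => (ε x y : ℝ)) - lam • (1 : Matrix ι ι ℝ)).rank ≤ r) :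
    ∃ l : ℤ, Odd l ∧ (l : ℝ) = lam := by
  classical
  set n := Fintype.card ι with hn
  set SR : Matrix ι ι ℝ := Matrix.of fun x y => (ε x y : ℝ) with hSRdef
  have hH : SR.IsHermitian := by
    ext x y
    simp only [Matrix.conjTranspose_apply, hSRdef, Matrix.of_apply, star_trivial]
    exact_mod_cast congrArg (Int.cast : ℤ → ℝ) (hsymm y x)
  set d := hH.eigenvalues with hd
  set V : Matrix ι ι ℝ := (hH.eigenvectorUnitary : Matrix ι ι ℝ) with hVdef
  have hV1 : V * star V = 1 := (Matrix.mem_unitaryGroup_iff).mp (hH.eigenvectorUnitary).2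
  have hV2 : star V * V = 1 := (Matrix.mem_unitaryGroup_iff').mp (hH.eigenvectorUnitary).2
  have hdet1 : V.det * (star V).det = 1 := by
    rw [← Matrix.det_mul, hV1, Matrix.det_one]
  have hVu : IsUnit V.det := IsUnit.of_mul_eq_one _ hdet1
  have hVsu : IsUnit (star V).det := IsUnit.of_mul_eq_one _ (by rwa [mul_comm] at hdet1)
  have hspec : SR = V * Matrix.diagonal d * star V := by
    have h := hH.spectral_theorem
    rwa [RCLike.ofReal_real_eq_id, Function.id_comp] at h
  have hconj : SR - lam • 1 = V * Matrix.diagonal (fun i => d i - lam) * star V := by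
    have h1 : Matrix.diagonal (fun i => d i - lam)
        = Matrix.diagonal d - lam • (1 : Matrix ι ι ℝ) := by
      ext i j
      by_cases h : i = j
      · subst h; simp
      · simp [Matrix.diagonal_apply_ne _ h, Matrix.one_apply_ne h]
    rw [h1, Matrix.mul_sub, Matrix.sub_mul, ← hspec]
    congr 1
    rw [Matrix.mul_smul, Matrix.mul_one, Matrix.smul_mul, hV1]
  have hrankdiag : (Matrix.diagonal (fun i => d i - lam)).rank ≤ r := by
    rw [hconj, Matrix.rank_mul_eq_left_of_isUnit_det _ _ hVsu,
      Matrix.rank_mul_eq_right_of_isUnit_det _ _ hVu] at hrank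
    exact hrank
  have hcardT : (Finset.univ.filter (fun i => d i ≠ lam)).card ≤ r := by
    have h0 := Matrix.rank_diagonal (fun i => d i - lam)
    rw [h0] at hrankdiag
    have h1 : (Finset.univ.filter (fun i => d i ≠ lam)).card
        = Fintype.card {i // d i - lam ≠ 0} := by
      rw [Fintype.card_subtype]
      congr 1
      apply Finset.filter_congr
      intro i _
      simp [sub_ne_zero]
    omega
  set T := Finset.univ.filter (fun i => d i = lam) with hT
  have hcardT' : n - r ≤ T.card := by
    have h1 := Finset.card_filter_add_card_filter_not (s := Finset.univ)
      (p := fun i => d i = lam)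
    simp only [← hT] at h1
    have : T.card + (Finset.univ.filter (fun i => d i ≠ lam)).card = n := by
      rw [hn, ← Finset.card_univ]
      exact h1
    omega
  -- charpoly divisibility
  have hcp : SR.charpoly = ∏ i, (X - C (d i)) := by
    rw [hspec, auxB _ _ _ hV1, auxC]
  have hdvdR : (X - C lam) ^ (n - r) ∣ SR.charpoly := by
    rw [hcp, ← Finset.prod_filter_mul_prod_filter_not Finset.univ (fun i => d i = lam)]
    apply Dvd.dvd.mul_right
    have : ∏ i ∈ T, (X - C (d i)) = (X - C lam) ^ T.card := by
      rw [← Finset.prod_const]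
      apply Finset.prod_congr rfl
      intro i hi
      rw [Finset.mem_filter] at hi
      rw [hi.2]
    rw [this]
    exact pow_dvd_pow _ hcardT'
  set SZ : Matrix ι ι ℤ := Matrix.of fun x y => ε x y with hSZdef
  have hmap : SZ.map (Int.cast : ℤ → ℝ) = SR := by
    ext x y; simp [hSZdef, hSRdef]
  set p : Polynomial ℤ := SZ.charpoly with hp
  have hpmap : p.map (Int.castRingHom ℝ) = SR.charpoly := by
    rw [hp, ← Matrix.charpoly_map SZ (Int.castRingHom ℝ)]
    congr 1
  have hpdeg : p.natDegree = n := by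
    rw [hp, Matrix.charpoly_natDegree_eq_dim, hn]
  obtain ⟨l, hl⟩ := auxD (m := n - r) p (Matrix.charpoly_monic SZ) hpdeg (by omega)
    (by omega) lam (by rw [hpmap]; exact hdvdR)
  refine ⟨l, ?_, hl⟩
  by_contra hodd
  rw [Int.not_odd_iff_even] at hodd
  have hl2 : (l : ZMod 2) = 0 := by
    rw [ZMod.intCast_zmod_eq_zero_iff_dvd]
    obtain ⟨t, rfl⟩ := hodd
    exact ⟨t, by push_cast; ring⟩
  -- choose even size s with r < s ≤ n
  set s : ℕ := if Even r then r + 2 else r + 1 with hs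
  have hseven : Even s := by
    rw [hs]
    split_ifs with h
    · exact h.add (by decide)
    · rw [Nat.not_even_iff_odd] at h
      simpa using h.add_one
  have hrs : r < s := by rw [hs]; split_ifs <;> omega
  have hsn : s ≤ n := by rw [hs]; split_ifs <;> omega
  set e := Fintype.equivFin ι with he
  set f : Fin s → ι := fun i => e.symm (Fin.castLE hsn i) with hf
  have hfinj : Function.Injective f := by
    intro a b hab
    have := e.symm.injective hab
    exact Fin.castLE_injective hsn this
  set N : Matrix (Fin s) (Fin s) ℤ := (SZ - l • 1).submatrix f f with hN
  have hNR : N.map (Int.cast : ℤ → ℝ) = (SR - lam • 1).submatrix f f := by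
    ext i j
    simp only [hN, Matrix.map_apply, Matrix.submatrix_apply, Matrix.sub_apply,
      Matrix.smul_apply, Matrix.one_apply, hmap.symm, smul_eq_mul]
    push_cast [hl]
    split_ifs <;> simp [hl]
  have hdet0 : N.det = 0 := by
    by_contra hne
    have hu : IsUnit ((N.map (Int.cast : ℤ → ℝ)).det) := by
      rw [show (N.map (Int.cast : ℤ → ℝ)).det = ((N.det : ℤ) : ℝ) from
        (RingHom.map_det (Int.castRingHom ℝ) N).symm]
      exact isUnit_iff_ne_zero.mpr (Int.cast_ne_zero.mpr hne)
    have hrk : (N.map (Int.cast : ℤ → ℝ)).rank = s := by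
      rw [Matrix.rank_of_isUnit _ ((Matrix.isUnit_iff_isUnit_det _).mpr hu)]
      simp
    have : (N.map (Int.cast : ℤ → ℝ)).rank ≤ r := by
      rw [hNR]
      exact le_trans (auxA _ f) hrank
    omega
  -- mod 2
  set N2 : Matrix (Fin s) (Fin s) (ZMod 2) := N.map (Int.cast : ℤ → ZMod 2) with hN2
  have hdet2 : N2.det = 0 := by
    rw [hN2, show (N.map (Int.cast : ℤ → ZMod 2)).det = ((N.det : ℤ) : ZMod 2) from
      (RingHom.map_det (Int.castRingHom (ZMod 2)) N).symm, hdet0]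
    simp
  set Jm : Matrix (Fin s) (Fin s) (ZMod 2) := Matrix.of fun _ _ => 1 with hJm
  have hN2eq : N2 = Jm + 1 := by
    ext i j
    simp only [hN2, hN, hJm, Matrix.map_apply, Matrix.submatrix_apply, Matrix.sub_apply,
      Matrix.smul_apply, Matrix.one_apply, Matrix.add_apply, Matrix.of_apply, hSZdef,
      smul_eq_mul]
    by_cases hij : i = j
    · subst hij
      simp only [if_pos rfl, hdiag, Int.cast_zero, smul_eq_mul, mul_one]
      simp [hl2]
      decide
    · have hfij : f i ≠ f j := fun h => hij (hfinj h)
      rcases hpm _ _ hfij with h | h <;>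
        simp [if_neg hfij, if_neg hij, h] <;> decide
  have hJ2 : Jm * Jm = 0 := by
    ext i j
    simp only [Matrix.mul_apply, hJm, Matrix.of_apply, mul_one, Finset.sum_const,
      Finset.card_univ, Fintype.card_fin, Matrix.zero_apply, nsmul_eq_mul, mul_one]
    rw [ZMod.natCast_eq_zero_iff]
    exact hseven.two_dvd
  have hsq : N2 * N2 = 1 := by
    rw [hN2eq, add_mul, mul_add, mul_add, hJ2, Matrix.one_mul, Matrix.mul_one, Matrix.one_mul]
    have : Jm + Jm = 0 := by
      ext i j
      simp only [hJm, Matrix.add_apply, Matrix.of_apply, Matrix.zero_apply]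
      decide
    rw [zero_add, ← add_assoc, this, zero_add]
  have : N2.det * N2.det = 1 := by
    rw [← Matrix.det_mul, hsq, Matrix.det_one]
  rw [hdet2, mul_zero] at this
  exact zero_ne_one this

theorem stmt_14 (r : ℕ) (α : ℝ) (hα0 : 0 < α) (hα1 : α < 1)
    (X : Finset (EuclideanSpace ℝ (Fin r)))
    (hunit : ∀ x ∈ X, ‖x‖ = 1)
    (hangle : ∀ x ∈ X, ∀ y ∈ X, x ≠ y →
      (inner ℝ x y : ℝ) = α ∨ (inner ℝ x y : ℝ) = -α)
    (hcard : 2 * r < X.card) :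
    ∃ m : ℤ, Odd m ∧ 1 / α = (m : ℝ) := by
  classical
  have hα : α ≠ 0 := ne_of_gt hα0
  have hXne : X.Nonempty := Finset.card_pos.mp (by omega)
  obtain ⟨x0, hx0⟩ := hXne
  have hr : 0 < r := by
    rcases Nat.eq_zero_or_pos r with h | h
    · exfalso
      have h1 : ‖x0‖ = 1 := hunit x0 hx0
      have h0 : ‖x0‖ = 0 := by
        rw [EuclideanSpace.norm_eq]
        subst h
        simp
      rw [h0] at h1
      norm_num at h1
    · exact h
  set ι := {x // x ∈ X} with hι
  have hcardι : Fintype.card ι = X.card := Fintype.card_coe X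
  set ε : ι → ι → ℤ := fun x y =>
    if (x : EuclideanSpace ℝ (Fin r)) = (y : EuclideanSpace ℝ (Fin r)) then 0
    else (if (inner ℝ (x : EuclideanSpace ℝ (Fin r)) (y : EuclideanSpace ℝ (Fin r)) : ℝ) = α
      then 1 else -1)
    with hε
  have hsymm : ∀ x y : ι, ε x y = ε y x := by
    intro x y
    simp only [hε]
    by_cases h : (x : EuclideanSpace ℝ (Fin r)) = (y : EuclideanSpace ℝ (Fin r))
    · rw [if_pos h, if_pos h.symm]
    · rw [if_neg h, if_neg (Ne.symm h), real_inner_comm]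
  have hdiag : ∀ x : ι, ε x x = 0 := fun x => by simp [hε]
  have hpm : ∀ x y : ι, x ≠ y → ε x y = 1 ∨ ε x y = -1 := by
    intro x y hxy
    have h : (x : EuclideanSpace ℝ (Fin r)) ≠ (y : EuclideanSpace ℝ (Fin r)) :=
      fun h => hxy (Subtype.ext h)
    simp only [hε, if_neg h]
    split_ifs <;> simp
  set lam : ℝ := -α⁻¹ with hlam
  set G : Matrix ι ι ℝ := Matrix.of fun x y =>
    (inner ℝ (x : EuclideanSpace ℝ (Fin r)) (y : EuclideanSpace ℝ (Fin r)) : ℝ) with hG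
  set B : Matrix (Fin r) ι ℝ := Matrix.of fun i x => (x : EuclideanSpace ℝ (Fin r)) i with hB
  have hGB : G = Bᵀ * B := by
    ext x y
    simp only [hG, hB, Matrix.of_apply, Matrix.mul_apply, Matrix.transpose_apply]
    rw [PiLp.inner_apply]
    apply Finset.sum_congr rfl
    intro i _
    simp [RCLike.inner_apply, mul_comm]
  have hrankG : G.rank ≤ r := by
    rw [hGB]
    exact le_trans (Matrix.rank_mul_le_left _ _)
      (le_trans (Matrix.rank_le_card_width _) (by simp))
  have hkey : (Matrix.of fun x y => (ε x y : ℝ)) - lam • (1 : Matrix ι ι ℝ) = α⁻¹ • G := by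
    ext x y
    simp only [Matrix.sub_apply, Matrix.of_apply, Matrix.smul_apply, Matrix.one_apply, hG,
      smul_eq_mul, hε]
    by_cases h : (x : EuclideanSpace ℝ (Fin r)) = (y : EuclideanSpace ℝ (Fin r))
    · have hxy : x = y := Subtype.ext h
      subst hxy
      rw [if_pos rfl, if_pos rfl]
      have hin : (inner ℝ (x : EuclideanSpace ℝ (Fin r)) (x : EuclideanSpace ℝ (Fin r)) : ℝ) = 1 := by
        rw [real_inner_self_eq_norm_mul_norm, hunit _ x.2]
        norm_num
      rw [hin, hlam]
      push_cast
      field_simp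
      ring
    · have hxyne : ¬ x = y := fun he => h (by rw [he])
      rw [if_neg h, if_neg hxyne, mul_zero, sub_zero]
      rcases hangle _ x.2 _ y.2 h with hin | hin
      · rw [hin, if_pos rfl]
        push_cast
        field_simp
      · rw [hin, if_neg (by intro hc; apply hα; linarith)]
        push_cast
        field_simp
  have hrank : ((Matrix.of fun x y => (ε x y : ℝ)) - lam • (1 : Matrix ι ι ℝ)).rank ≤ r := by
    rw [hkey]
    have h2 : α⁻¹ • G = (α⁻¹ • (1 : Matrix ι ι ℝ)) * G := by
      rw [Matrix.smul_mul, Matrix.one_mul]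
    rw [h2]
    exact le_trans (Matrix.rank_mul_le_right _ _) hrankG
  obtain ⟨l, hlodd, hl⟩ := seidel_aux ε hsymm hdiag hpm r hr (by omega) lam hrank
  refine ⟨-l, hlodd.neg, ?_⟩
  rw [one_div]
  push_cast
  rw [hlam] at hl
  linarith
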